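/- Any two rank-1 projections P, Q in M_{n+1}(R) with all diagonal entries equal to 1/(n+1) are conjugate by a diagonal sign matrix: there exist ε_1,...,ε_{n+1} ∈ {±1} such that Q = D P D where D = diag(ε_1,...,ε_{n+1}). -/

import Mathlib

open Matrix

/-- A rank-one real matrix decomposes as an outer product. -/
lemma stmt9_rank_one_decomp {m : ℕ} (A : Matrix (Fin m) (Fin m) ℝ) (h : A.rank = 1) :
    ∃ c v : Fin m → ℝ, ∀ i j, A i j = c i * v j := by
  rw [Matrix.rank_eq_finrank_span_row, finrank_eq_one_iff'] at h
  obtain ⟨w, hw0, hwall⟩ := h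
  have hmem : ∀ i : Fin m, A i ∈ Submodule.span ℝ (Set.range A) :=
    fun i => Submodule.subset_span (Set.mem_range_self i)
  choose c hc using fun i => hwall ⟨A i, hmem i⟩
  refine ⟨c, fun j => (w : Fin m → ℝ) j, fun i j => ?_⟩
  have := congrArg (fun x : Submodule.span ℝ (Set.range A) => (x : Fin m → ℝ) j) (hc i)
  simpa using this.symm

/-- Any two rank-1 projections in `M_{n+1}(ℝ)` with all diagonal entries `1/(n+1)` are
conjugate by a diagonal sign matrix. -/
theorem stmt9 (n : ℕ) (P Q : Matrix (Fin (n + 1)) (Fin (n + 1)) ℝ)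
    (hPsym : Pᵀ = P) (hPidem : P * P = P) (hPrank : P.rank = 1)
    (hPdiag : ∀ i, P i i = 1 / ((n : ℝ) + 1))
    (hQsym : Qᵀ = Q) (hQidem : Q * Q = Q) (hQrank : Q.rank = 1)
    (hQdiag : ∀ i, Q i i = 1 / ((n : ℝ) + 1)) :
    ∃ ε : Fin (n + 1) → ℝ, (∀ i, ε i = 1 ∨ ε i = -1) ∧
      Q = Matrix.diagonal ε * P * Matrix.diagonal ε := by
  set a : ℝ := 1 / ((n : ℝ) + 1) with ha_def
  have ha : 0 < a := by positivity
  obtain ⟨c, v, hP⟩ := stmt9_rank_one_decomp P hPrank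
  obtain ⟨d, w, hQ⟩ := stmt9_rank_one_decomp Q hQrank
  have hPsym' : ∀ i j, P j i = P i j := fun i j => congrFun (congrFun hPsym i) j
  have hQsym' : ∀ i j, Q j i = Q i j := fun i j => congrFun (congrFun hQsym i) j
  -- vanishing 2×2 minors
  have hPminor : ∀ i j : Fin (n + 1), P i j * P 0 0 = P i 0 * P j 0 := by
    intro i j
    rw [← hPsym' j 0, hP i j, hP 0 0, hP i 0, hP 0 j]; ring
  have hQminor : ∀ i j : Fin (n + 1), Q i j * Q 0 0 = Q i 0 * Q j 0 := by
    intro i j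
    rw [← hQsym' j 0, hQ i j, hQ 0 0, hQ i 0, hQ 0 j]; ring
  have hPsq : ∀ i, P i 0 * P i 0 = a * a := by
    intro i
    have := hPminor i i
    rw [hPdiag i, hPdiag 0] at this
    linarith [this]
  have hQsq : ∀ i, Q i 0 * Q i 0 = a * a := by
    intro i
    have := hQminor i i
    rw [hQdiag i, hQdiag 0] at this
    linarith [this]
  have hPne : ∀ i, P i 0 ≠ 0 := by
    intro i h
    have := hPsq i
    rw [h] at this
    nlinarith [ha]
  refine ⟨fun i => Q i 0 / P i 0, fun i => ?_, ?_⟩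
  · have h1 : (Q i 0 / P i 0) * (Q i 0 / P i 0) = 1 := by
      field_simp
      rw [sq, sq, hQsq i, hPsq i]
      exact div_self (by positivity)
    exact mul_self_eq_one_iff.mp h1
  · ext i j
    rw [Matrix.mul_diagonal, Matrix.diagonal_mul]
    have hi := hPne i
    have hj := hPne j
    field_simp
    -- goal roughly: Q i j * (P i 0 * P j 0) = Q i 0 * P i j * Q j 0 (up to assoc)
    have h1 := hPminor i j
    have h2 := hQminor i j
    rw [hPdiag 0] at h1
    rw [hQdiag 0] at h2
    linear_combination P i j * h2 - Q i j * h1
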